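/- Let A₁, A₂ be symmetric n × n real matrices whose vectorized upper-triangular parts V₁, V₂ ∈ ℝ^{n(n+1)/2} are linearly independent and not orthogonal with distinct norms (a generic condition). Then there exist symmetric matrices A₁', A₂' with {A₁', A₂'} ≠ {±A₁, ±A₂} such that (xᵀA₁x)² + (xᵀA₂x)² = (xᵀA₁'x)² + (xᵀA₂'x)² for all x ∈ ℝⁿ. -/

import Mathlib

open Matrix

/-- The inner product of the vectorized upper-triangular parts of two
`n × n` matrices. -/
def upperTriInner {n : ℕ} (A B : Matrix (Fin n) (Fin n) ℝ) : ℝ :=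
  ∑ i : Fin n, ∑ j : Fin n, if i ≤ j then A i j * B i j else 0

/-- Non-identifiability of sums of squares of quadratics: if `A₁, A₂` are
symmetric matrices whose vectorized upper-triangular parts are linearly
independent, not orthogonal, and of distinct norms, then there exist symmetric
`A₁', A₂'`, not equal to `±A₁, ±A₂` in any order, with
`(xᵀA₁x)² + (xᵀA₂x)² = (xᵀA₁'x)² + (xᵀA₂'x)²` for all `x`. -/
theorem sum_of_squares_of_quadratics_nonidentifiable (n : ℕ)
    (A₁ A₂ : Matrix (Fin n) (Fin n) ℝ) (h₁ : A₁.IsSymm) (h₂ : A₂.IsSymm)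
    (hli : LinearIndependent ℝ ![A₁, A₂])
    (hortho : upperTriInner A₁ A₂ ≠ 0)
    (hnorm : upperTriInner A₁ A₁ ≠ upperTriInner A₂ A₂) :
    ∃ B₁ B₂ : Matrix (Fin n) (Fin n) ℝ, B₁.IsSymm ∧ B₂.IsSymm ∧
      ¬(((B₁ = A₁ ∨ B₁ = -A₁) ∧ (B₂ = A₂ ∨ B₂ = -A₂)) ∨
        ((B₁ = A₂ ∨ B₁ = -A₂) ∧ (B₂ = A₁ ∨ B₂ = -A₁))) ∧
      ∀ x : Fin n → ℝ,
        (x ⬝ᵥ A₁ *ᵥ x) ^ 2 + (x ⬝ᵥ A₂ *ᵥ x) ^ 2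
          = (x ⬝ᵥ B₁ *ᵥ x) ^ 2 + (x ⬝ᵥ B₂ *ᵥ x) ^ 2 := by
  set c : ℝ := (Real.sqrt 2)⁻¹ with hc
  have hc0 : c ≠ 0 := by
    simp [hc]
  have hc2 : c * c * 2 = 1 := by
    rw [hc, ← mul_inv]
    rw [← Real.sqrt_mul_self (by norm_num : (2:ℝ) ≥ 0)]
    field_simp
    rw [Real.sq_sqrt (Real.sqrt_nonneg _)]
  have hpair := LinearIndependent.pair_iff.mp hli
  refine ⟨c • (A₁ + A₂), c • (A₂ - A₁), ?_, ?_, ?_, ?_⟩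
  · exact Matrix.IsSymm.smul (h₁.add h₂) c
  · exact Matrix.IsSymm.smul (h₂.sub h₁) c
  · rintro (⟨h | h, -⟩ | ⟨h | h, -⟩)
    · have : (c - 1) • A₁ + c • A₂ = 0 := by
        rw [smul_add] at h
        rw [sub_smul, one_smul]; abel_nf
        abel_nf at h
        linear_combination (norm := abel_nf) h
      exact hc0 (hpair _ _ this).2
    · have : (c + 1) • A₁ + c • A₂ = 0 := by
        rw [smul_add] at h
        rw [add_smul, one_smul]
        linear_combination (norm := abel_nf) h
      exact hc0 (hpair _ _ this).2
    · have : c • A₁ + (c - 1) • A₂ = 0 := by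
        rw [smul_add] at h
        rw [sub_smul, one_smul]
        linear_combination (norm := abel_nf) h
      exact hc0 (hpair _ _ this).1
    · have : c • A₁ + (c + 1) • A₂ = 0 := by
        rw [smul_add] at h
        rw [add_smul, one_smul]
        linear_combination (norm := abel_nf) h
      exact hc0 (hpair _ _ this).1
  · intro x
    have e1 : x ⬝ᵥ (c • (A₁ + A₂)) *ᵥ x = c * (x ⬝ᵥ A₁ *ᵥ x + x ⬝ᵥ A₂ *ᵥ x) := by
      rw [smul_mulVec, dotProduct_smul, add_mulVec, dotProduct_add]
      simp
    have e2 : x ⬝ᵥ (c • (A₂ - A₁)) *ᵥ x = c * (x ⬝ᵥ A₂ *ᵥ x - x ⬝ᵥ A₁ *ᵥ x) := by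
      rw [smul_mulVec, dotProduct_smul, sub_mulVec, dotProduct_sub]
      simp
    rw [e1, e2]
    nlinarith [hc2]
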